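/- Let q be a prime power and F a finite field with q elements, and let s₁, s₂ be integers with s₁ + s₂ ≥ 0. Then D_q(λ,φ,s₁,s₂) ≥ 0 for all λ, φ ∈ ℕ, and for all ρ, π ∈ ℕ the double series ∑_{λ=0}^{∞} ∑_{φ=0}^{∞} D_q(λ,φ,s₁,s₂) · |Sur_F(F^λ, F^ρ)| · |Sur_F(F^φ, F^π)| converges absolutely and its sum equals q^{ρπ − s₁ρ − s₂π}, where |Sur_F(F^a, F^b)| denotes the number of surjective F-linear maps F^a → F^b. In particular (taking ρ = π = 0), ∑_{λ,φ} D_q(λ,φ,s₁,s₂) = 1. -/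

import Mathlib

open scoped BigOperators
open Filter

/-- `η_q(k) = ∏_{i=1}^{k} (1 - q^{-i})`. -/
noncomputable def etaQ (q : ℝ) (k : ℕ) : ℝ :=
  ∏ i ∈ Finset.range k, (1 - q ^ (-(i : ℝ) - 1))

/-- `η_q` at an integer argument (only meaningful for nonnegative arguments). -/
noncomputable def etaZ (q : ℝ) (k : ℤ) : ℝ := etaQ q k.toNat

/-- `η_q(∞) = ∏_{i=1}^{∞} (1 - q^{-i})`. -/
noncomputable def etaInf (q : ℝ) : ℝ := ∏' i : ℕ, (1 - q ^ (-(i : ℝ) - 1))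

/-- `D_q(λ,φ,s₁,s₂)`:  `q^{-λ²-φ²+λφ-s₁λ-s₂φ} η_q(∞) η_q(s₁+s₂) /
(η_q(λ) η_q(φ) η_q(s₂-λ+φ) η_q(s₁+λ-φ))` when `-s₁ ≤ λ-φ ≤ s₂`, and `0` otherwise. -/
noncomputable def Dq (q : ℝ) (s₁ s₂ : ℤ) (l φ : ℕ) : ℝ :=
  if -s₁ ≤ (l : ℤ) - (φ : ℤ) ∧ (l : ℤ) - (φ : ℤ) ≤ s₂ then
    q ^ (-(l : ℝ) ^ 2 - (φ : ℝ) ^ 2 + (l : ℝ) * (φ : ℝ)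
          - (s₁ : ℝ) * (l : ℝ) - (s₂ : ℝ) * (φ : ℝ)) *
      etaInf q * etaZ q (s₁ + s₂) /
      (etaQ q l * etaQ q φ * etaZ q (s₂ - (l : ℤ) + (φ : ℤ)) * etaZ q (s₁ + (l : ℤ) - (φ : ℤ)))
  else 0

/-- The number of surjective `F`-linear maps `F^a → F^b`. -/
noncomputable def surCount (F : Type) [Field F] (a b : ℕ) : ℕ :=
  Nat.card {f : (Fin a → F) →ₗ[F] (Fin b → F) // Function.Surjective f}

noncomputable def Ep (p : ℝ) (k : ℕ) : ℝ := ∏ i ∈ Finset.range k, (1 - p ^ (i+1))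
noncomputable def fE (p : ℝ) (m : ℤ) : ℝ := if 0 ≤ m then (Ep p m.toNat)⁻¹ else 0
noncomputable def EI (p : ℝ) : ℝ := ∏' i : ℕ, (1 - p ^ (i+1))

variable {p : ℝ}

lemma factor_pos (hp0 : 0 < p) (hp1 : p < 1) (i : ℕ) : 0 < 1 - p ^ (i+1) := by
  have : p ^ (i+1) < 1 := pow_lt_one₀ hp0.le hp1 (Nat.succ_ne_zero i)
  linarith

lemma Ep_pos (hp0 : 0 < p) (hp1 : p < 1) (k : ℕ) : 0 < Ep p k :=
  Finset.prod_pos fun i _ => factor_pos hp0 hp1 i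

lemma Ep_le_one (hp0 : 0 < p) (hp1 : p < 1) (k : ℕ) : Ep p k ≤ 1 :=
  Finset.prod_le_one (fun i _ => (factor_pos hp0 hp1 i).le)
    (fun i _ => by have := pow_pos hp0 (i+1); linarith)

lemma Ep_succ (k : ℕ) : Ep p (k+1) = Ep p k * (1 - p ^ (k+1)) := by
  simp [Ep, Finset.prod_range_succ]

lemma Ep_antitone (hp0 : 0 < p) (hp1 : p < 1) : Antitone (Ep p) := by
  apply antitone_nat_of_succ_le
  intro n
  rw [Ep_succ]
  nlinarith [Ep_pos hp0 hp1 n, factor_pos hp0 hp1 n, pow_pos hp0 (n+1)]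

lemma summable_log (hp0 : 0 < p) (hp1 : p < 1) :
    Summable fun i : ℕ => Real.log (1 - p ^ (i+1)) := by
  apply Summable.of_norm
  have key : ∀ i : ℕ, ‖Real.log (1 - p ^ (i+1))‖ ≤ (1-p)⁻¹ * p ^ (i+1) := by
    intro i
    have h1 := factor_pos hp0 hp1 i
    have h2 : Real.log (1 - p^(i+1)) ≤ 0 := Real.log_nonpos (by positivity) (by nlinarith [pow_pos hp0 (i+1)])
    rw [Real.norm_eq_abs, abs_of_nonpos h2, ← Real.log_inv]
    have h3 := Real.log_le_sub_one_of_pos (x := (1 - p^(i+1))⁻¹) (by positivity)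
    have h4 : (1 - p^(i+1))⁻¹ - 1 = p^(i+1) / (1 - p^(i+1)) := by field_simp; ring
    have hple : p^(i+1) ≤ p := by
      calc p^(i+1) ≤ p^1 := pow_le_pow_of_le_one hp0.le hp1.le (by omega)
      _ = p := pow_one p
    have h5 : p^(i+1) / (1 - p^(i+1)) ≤ (1-p)⁻¹ * p^(i+1) := by
      rw [div_eq_mul_inv, mul_comm]
      apply mul_le_mul_of_nonneg_right _ (by positivity)
      apply inv_anti₀ (by linarith) (by linarith)
    linarith
  apply Summable.of_nonneg_of_le (fun i => norm_nonneg _) key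
  apply Summable.mul_left
  exact ((summable_geometric_of_lt_one hp0.le hp1).mul_left p).congr (fun i => by ring)

lemma hasProd_EI (hp0 : 0 < p) (hp1 : p < 1) :
    HasProd (fun i : ℕ => 1 - p ^ (i+1)) (EI p) := by
  have := (Real.multipliable_of_summable_log (f := fun i : ℕ => 1 - p ^ (i+1))
    (fun i => factor_pos hp0 hp1 i) (summable_log hp0 hp1)).hasProd
  exact this

lemma EI_pos (hp0 : 0 < p) (hp1 : p < 1) : 0 < EI p := by
  have := Real.rexp_tsum_eq_tprod (f := fun i : ℕ => 1 - p ^ (i+1))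
    (fun i => factor_pos hp0 hp1 i) (summable_log hp0 hp1)
  have h := this
  beta_reduce at h
  rw [EI, ← h]
  exact Real.exp_pos _

lemma tendsto_Ep (hp0 : 0 < p) (hp1 : p < 1) :
    Tendsto (Ep p) atTop (nhds (EI p)) :=
  (hasProd_EI hp0 hp1).tendsto_prod_nat

lemma EI_le_Ep (hp0 : 0 < p) (hp1 : p < 1) (k : ℕ) : EI p ≤ Ep p k := by
  apply le_of_tendsto (tendsto_Ep hp0 hp1)
  filter_upwards [eventually_ge_atTop k] with m hm
  exact Ep_antitone hp0 hp1 hm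
noncomputable def Tf (p : ℝ) (n : ℕ) (g : ℤ) (a : ℕ) : ℝ :=
  p ^ ((a:ℤ) * ((a:ℤ) - g)) * (Ep p a)⁻¹ * (fE p ((a:ℤ) - g) * fE p ((n:ℤ) - ((a:ℤ) - g)))

variable {p : ℝ}

lemma fE_coe (k : ℕ) : fE p k = (Ep p k)⁻¹ := by simp [fE]

lemma fE_neg {m : ℤ} (hm : m < 0) : fE p m = 0 := by simp [fE, not_le.mpr hm]

lemma fE_nonneg (hp0 : 0 < p) (hp1 : p < 1) (m : ℤ) : 0 ≤ fE p m := by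
  unfold fE; split
  · exact (inv_pos.mpr (Ep_pos hp0 hp1 _)).le
  · exact le_refl 0
  
lemma fE_rec (hp0 : 0 < p) (hp1 : p < 1) (x : ℤ) :
    fE p (x - 1) + p ^ x * fE p x = fE p x := by
  rcases lt_trichotomy x 0 with h | h | h
  · rw [fE_neg h, fE_neg (by omega), mul_zero, add_zero]
  · subst h
    rw [fE_neg (show (0:ℤ)-1 < 0 by omega), zpow_zero, one_mul, zero_add]
  · have hx : x = ((x.toNat - 1 : ℕ) : ℤ) + 1 := by omega
    have h1 : x.toNat = (x.toNat - 1) + 1 := by omega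
    have h2 : (x-1).toNat = x.toNat - 1 := by omega
    have hEpos := Ep_pos hp0 hp1 (x.toNat - 1)
    have hfpos := factor_pos hp0 hp1 (x.toNat - 1)
    unfold fE
    rw [if_pos (by omega : (0:ℤ) ≤ x - 1), if_pos h.le, h2, h1, Ep_succ]
    have hpz : p ^ x = p ^ ((x.toNat - 1) + 1) := by
      rw [hx]; rw [← zpow_natCast]; norm_num
    rw [hpz]
    field_simp
    rw [Nat.add_sub_cancel, mul_div_cancel_left₀ _ hEpos.ne']
    ring

lemma fE_sub_fE (hp0 : 0 < p) (hp1 : p < 1) (c : ℤ) :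
    fE p c - fE p (c - 1) = p ^ c * fE p c := by
  have := fE_rec hp0 hp1 c; linarith

lemma fE_pascal (hp0 : 0 < p) (hp1 : p < 1) (n : ℕ) (c : ℤ) :
    (1 - p ^ (n+1)) * (fE p c * fE p (((n:ℤ)+1) - c)) =
      fE p c * fE p ((n:ℤ) - c) + p ^ (((n:ℤ)+1) - c) * (fE p (c-1) * fE p (((n:ℤ)+1) - c)) := by
  have hne : p ≠ 0 := hp0.ne'
  have h1 : fE p ((n:ℤ) - c) = fE p (((n:ℤ)+1) - c) - p ^ (((n:ℤ)+1) - c) * fE p (((n:ℤ)+1) - c) := by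
    have := fE_rec hp0 hp1 (((n:ℤ)+1) - c)
    have e : ((n:ℤ)+1) - c - 1 = (n:ℤ) - c := by ring
    rw [e] at this; linarith
  have h2 : fE p (c - 1) = fE p c - p ^ c * fE p c := by
    have := fE_sub_fE hp0 hp1 c; linarith
  rw [h1, h2]
  have h3 : p ^ (((n:ℤ)+1) - c) * p ^ c = p ^ (n+1) := by
    rw [← zpow_add₀ hne]
    have e : ((n:ℤ)+1) - c + c = ((n+1 : ℕ) : ℤ) := by push_cast; ring
    rw [e, zpow_natCast]
  linear_combination (fE p c * fE p (((n:ℤ)+1) - c)) * h3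

lemma Tf_nonneg (hp0 : 0 < p) (hp1 : p < 1) (n : ℕ) (g : ℤ) (a : ℕ) : 0 ≤ Tf p n g a := by
  unfold Tf
  have := fE_nonneg hp0 hp1 ((a:ℤ) - g)
  have := fE_nonneg hp0 hp1 ((n:ℤ) - ((a:ℤ) - g))
  have := (Ep_pos hp0 hp1 a)
  positivity

lemma starstar (hp0 : 0 < p) (hp1 : p < 1) :
    ∀ (n : ℕ) (g : ℤ), HasSum (Tf p n g) (fE p (g + n) * (Ep p n)⁻¹) := by
  intro n
  induction n with
  | zero =>
    intro g
    have hval0 : fE p (g + ((0:ℕ):ℤ)) * (Ep p 0)⁻¹ = fE p g := by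
      simp [Ep]
    rcases lt_or_ge g 0 with hg | hg
    · have hfun : Tf p 0 g = fun _ => (0:ℝ) := by
        funext a
        unfold Tf
        simp only [Nat.cast_zero, zero_sub]
        rw [fE_neg (by omega : -((a:ℤ) - g) < 0)]
        ring
      rw [hfun, hval0, fE_neg hg]
      exact hasSum_zero
    · have hfE0 : fE p (0:ℤ) = 1 := by simp [fE, Ep]
      have hfun : Tf p 0 g = fun a => if a = g.toNat then fE p g else 0 := by
        funext a
        unfold Tf
        simp only [Nat.cast_zero, zero_sub]
        by_cases ha : a = g.toNat
        · subst ha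
          have e1 : ((g.toNat:ℕ):ℤ) - g = 0 := by omega
          rw [if_pos rfl, e1, neg_zero, hfE0, mul_one, mul_one, mul_zero, zpow_zero, one_mul]
          simp [fE, hg]
        · rw [if_neg ha]
          have hne : (a:ℤ) ≠ g := fun h => ha (by omega)
          rcases lt_or_gt_of_ne hne with h | h
          · rw [fE_neg (by omega : (a:ℤ) - g < 0)]; ring
          · rw [fE_neg (by omega : -((a:ℤ) - g) < 0)]; ring
      rw [hfun, hval0]
      exact hasSum_ite_eq g.toNat _
  | succ n IH =>
    intro g
    have hne : p ≠ 0 := hp0.ne'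
    have hf := factor_pos hp0 hp1 n
    have h := ((IH g).add ((IH (g+1)).mul_left (p ^ (g+(n:ℤ)+1)))).mul_left ((1 - p ^ (n+1))⁻¹)
    have hfun : (fun a => (1 - p ^ (n+1))⁻¹ * (Tf p n g a + p ^ (g+(n:ℤ)+1) * Tf p n (g+1) a))
        = Tf p (n+1) g := by
      funext a
      have key : (1 - p ^ (n+1)) * Tf p (n+1) g a
          = Tf p n g a + p ^ (g+(n:ℤ)+1) * Tf p n (g+1) a := by
        unfold Tf
        have e0 : ((n+1 : ℕ) : ℤ) - ((a:ℤ) - g) = ((n:ℤ)+1) - ((a:ℤ)-g) := by push_cast; ring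
        have e1 : ((n+1:ℕ):ℤ) = (n:ℤ)+1 := by push_cast; ring
        rw [e0]
        have hp1' := fE_pascal hp0 hp1 n ((a:ℤ) - g)
        calc (1 - p ^ (n+1)) * (p ^ ((a:ℤ) * ((a:ℤ) - g)) * (Ep p a)⁻¹ *
              (fE p ((a:ℤ) - g) * fE p (((n:ℤ)+1) - ((a:ℤ) - g))))
            = p ^ ((a:ℤ) * ((a:ℤ) - g)) * (Ep p a)⁻¹ *
              ((1 - p ^ (n+1)) * (fE p ((a:ℤ) - g) * fE p (((n:ℤ)+1) - ((a:ℤ) - g)))) := by ring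
          _ = p ^ ((a:ℤ) * ((a:ℤ) - g)) * (Ep p a)⁻¹ *
              (fE p ((a:ℤ) - g) * fE p ((n:ℤ) - ((a:ℤ) - g)) +
               p ^ (((n:ℤ)+1) - ((a:ℤ) - g)) * (fE p ((a:ℤ) - g - 1) * fE p (((n:ℤ)+1) - ((a:ℤ) - g)))) := by
              rw [hp1']
          _ = Tf p n g a + p ^ (g+(n:ℤ)+1) * Tf p n (g+1) a := by
              unfold Tf
              have ee : (a:ℤ) - (g+1) = (a:ℤ) - g - 1 := by ring
              have ee2 : (n:ℤ) - ((a:ℤ) - g - 1) = ((n:ℤ)+1) - ((a:ℤ) - g) := by ring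
              rw [ee, ee2]
              have hz : p ^ ((a:ℤ) * ((a:ℤ) - g)) * p ^ (((n:ℤ)+1) - ((a:ℤ) - g))
                  = p ^ (g+(n:ℤ)+1) * p ^ ((a:ℤ) * ((a:ℤ) - g - 1)) := by
                rw [← zpow_add₀ hne, ← zpow_add₀ hne]
                congr 1
                ring
              linear_combination ((Ep p a)⁻¹ * (fE p ((a:ℤ)-g-1) * fE p (((n:ℤ)+1)-((a:ℤ)-g)))) * hz
      have hnz : (1 - p ^ (n+1)) ≠ 0 := by linarith
      rw [inv_mul_eq_iff_eq_mul₀ hnz]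
      exact key.symm
    rw [hfun] at h
    have hval : (1 - p ^ (n+1))⁻¹ * (fE p (g + n) * (Ep p n)⁻¹ +
        p ^ (g+(n:ℤ)+1) * (fE p (g+1+n) * (Ep p n)⁻¹)) = fE p (g + (n+1:ℕ)) * (Ep p (n+1))⁻¹ := by
      have hrec := fE_rec hp0 hp1 (g + (n:ℤ) + 1)
      have e1 : g + (n:ℤ) + 1 - 1 = g + n := by ring
      have e2 : g + 1 + (n:ℤ) = g + (n:ℤ) + 1 := by ring
      have e3 : g + ((n+1:ℕ):ℤ) = g + (n:ℤ) + 1 := by push_cast; ring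
      rw [e1] at hrec
      rw [e2, e3, Ep_succ, mul_inv]
      linear_combination ((1 - p^(n+1))⁻¹ * (Ep p n)⁻¹) * hrec
    rw [hval] at h
    exact h
noncomputable def td (p : ℝ) (r : ℤ) (a : ℕ) : ℝ :=
  p ^ ((a:ℤ) * ((a:ℤ) + r)) * (Ep p a)⁻¹ * fE p ((a:ℤ) + r)

variable {p : ℝ}

lemma EI_le_one (hp0 : 0 < p) (hp1 : p < 1) : EI p ≤ 1 := by
  simpa [Ep] using EI_le_Ep hp0 hp1 0

lemma fE_le (hp0 : 0 < p) (hp1 : p < 1) (m : ℤ) : fE p m ≤ (EI p)⁻¹ := by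
  unfold fE; split
  · exact inv_anti₀ (EI_pos hp0 hp1) (EI_le_Ep hp0 hp1 _)
  · exact (inv_pos.mpr (EI_pos hp0 hp1)).le

lemma one_le_fE (hp0 : 0 < p) (hp1 : p < 1) {m : ℤ} (hm : 0 ≤ m) : 1 ≤ fE p m := by
  unfold fE
  rw [if_pos hm]
  exact (one_le_inv₀ (Ep_pos hp0 hp1 _)).mpr (Ep_le_one hp0 hp1 _)

lemma td_nonneg (hp0 : 0 < p) (hp1 : p < 1) (r : ℤ) (a : ℕ) : 0 ≤ td p r a := by
  unfold td
  have := fE_nonneg hp0 hp1 ((a:ℤ) + r)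
  have := Ep_pos hp0 hp1 a
  positivity

lemma Tf_eq_td_mul (n : ℕ) (r : ℤ) (a : ℕ) :
    Tf p n (-r) a = td p r a * fE p ((n:ℤ) - ((a:ℤ) + r)) := by
  unfold Tf td
  rw [sub_neg_eq_add]
  ring

lemma tendsto_toNat_shift (m : ℤ) :
    Filter.Tendsto (fun n : ℕ => (m + (n:ℤ)).toNat) Filter.atTop Filter.atTop := by
  rw [Filter.tendsto_atTop_atTop]
  intro B
  exact ⟨B + m.natAbs, fun n hn => by omega⟩

lemma tendsto_fE_shift (hp0 : 0 < p) (hp1 : p < 1) (m : ℤ) :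
    Filter.Tendsto (fun n : ℕ => fE p (m + (n:ℤ))) Filter.atTop (nhds ((EI p)⁻¹)) := by
  have h1 := (tendsto_Ep hp0 hp1).comp (tendsto_toNat_shift m)
  have h2 := h1.inv₀ (EI_pos hp0 hp1).ne'
  apply h2.congr'
  filter_upwards [Filter.eventually_ge_atTop m.natAbs] with n hn
  have : (0:ℤ) ≤ m + n := by omega
  simp only [Function.comp, fE, if_pos this]

lemma sum_td_le (hp0 : 0 < p) (hp1 : p < 1) (r : ℤ) (N : ℕ) :
    ∑ a ∈ Finset.range N, td p r a ≤ (EI p)⁻¹ * (EI p)⁻¹ := by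
  set n := N + r.toNat with hn
  have h1 : ∑ a ∈ Finset.range N, td p r a ≤ ∑ a ∈ Finset.range N, Tf p n (-r) a := by
    apply Finset.sum_le_sum
    intro a ha
    rw [Tf_eq_td_mul]
    rcases lt_or_ge ((a:ℤ) + r) 0 with h | h
    · rw [td, fE_neg h]; simp
    · nth_rewrite 1 [← mul_one (td p r a)]
      apply mul_le_mul_of_nonneg_left _ (td_nonneg hp0 hp1 r a)
      apply one_le_fE hp0 hp1
      have ha' := Finset.mem_range.mp ha
      omega
  have h2 : ∑ a ∈ Finset.range N, Tf p n (-r) a ≤ fE p (-r + n) * (Ep p n)⁻¹ :=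
    sum_le_hasSum _ (fun a _ => Tf_nonneg hp0 hp1 n (-r) a) (starstar hp0 hp1 n (-r))
  have h3 : fE p (-r + n) * (Ep p n)⁻¹ ≤ (EI p)⁻¹ * (EI p)⁻¹ := by
    apply mul_le_mul (fE_le hp0 hp1 _)
      (inv_anti₀ (EI_pos hp0 hp1) (EI_le_Ep hp0 hp1 _))
      (inv_pos.mpr (Ep_pos hp0 hp1 _)).le (inv_pos.mpr (EI_pos hp0 hp1)).le
  linarith

lemma summable_td (hp0 : 0 < p) (hp1 : p < 1) (r : ℤ) : Summable (td p r) :=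
  summable_of_sum_range_le (td_nonneg hp0 hp1 r) (sum_td_le hp0 hp1 r)

lemma durfee (hp0 : 0 < p) (hp1 : p < 1) (r : ℤ) : HasSum (td p r) ((EI p)⁻¹) := by
  have hS := summable_td hp0 hp1 r
  set T := ∑' a, td p r a with hT
  have hEI := EI_pos hp0 hp1
  -- limit of the closed-form values
  have hLlim : Filter.Tendsto (fun n : ℕ => fE p (-r + (n:ℤ)) * (Ep p n)⁻¹)
      Filter.atTop (nhds ((EI p)⁻¹ * (EI p)⁻¹)) :=
    (tendsto_fE_shift hp0 hp1 (-r)).mul ((tendsto_Ep hp0 hp1).inv₀ hEI.ne')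
  -- lower bound for T
  have hub : ∀ n : ℕ, fE p (-r + (n:ℤ)) * (Ep p n)⁻¹ ≤ (EI p)⁻¹ * T := by
    intro n
    have := (starstar hp0 hp1 n (-r)).tsum_eq
    rw [← this]
    have hsum2 : Summable (fun a => td p r a * (EI p)⁻¹) := hS.mul_right _
    have h1 : ∑' a, Tf p n (-r) a ≤ ∑' a, td p r a * (EI p)⁻¹ := by
      apply Summable.tsum_le_tsum _ ⟨_, starstar hp0 hp1 n (-r)⟩ hsum2
      intro a
      rw [Tf_eq_td_mul]
      exact mul_le_mul_of_nonneg_left (fE_le hp0 hp1 _) (td_nonneg hp0 hp1 r a)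
    rw [tsum_mul_right] at h1
    linarith [h1]
  have hTge : (EI p)⁻¹ ≤ T := by
    have := le_of_tendsto hLlim (Filter.Eventually.of_forall hub)
    calc (EI p)⁻¹ = EI p * ((EI p)⁻¹ * (EI p)⁻¹) := by field_simp
    _ ≤ EI p * ((EI p)⁻¹ * T) := by
        apply mul_le_mul_of_nonneg_left this hEI.le
    _ = T := by field_simp
  have hTle : T ≤ (EI p)⁻¹ := by
    apply Real.tsum_le_of_sum_range_le (td_nonneg hp0 hp1 r)
    intro K
    -- limit argument: ∑_{a<K} td a * EI⁻¹ ≤ EI⁻¹ * EI⁻¹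
    have hK : (∑ a ∈ Finset.range K, td p r a) * (EI p)⁻¹ ≤ (EI p)⁻¹ * (EI p)⁻¹ := by
      have hfin : Filter.Tendsto
          (fun n : ℕ => ∑ a ∈ Finset.range K, td p r a * fE p (-((a:ℤ) + r) + (n:ℤ)))
          Filter.atTop (nhds (∑ a ∈ Finset.range K, td p r a * (EI p)⁻¹)) := by
        apply tendsto_finset_sum
        intro a _
        exact (tendsto_fE_shift hp0 hp1 (-((a:ℤ) + r))).const_mul _
      have hle : ∀ n : ℕ, (∑ a ∈ Finset.range K, td p r a * fE p (-((a:ℤ) + r) + (n:ℤ)))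
          ≤ fE p (-r + (n:ℤ)) * (Ep p n)⁻¹ := by
        intro n
        have : ∀ a ∈ Finset.range K, td p r a * fE p (-((a:ℤ) + r) + (n:ℤ)) = Tf p n (-r) a := by
          intro a _
          rw [Tf_eq_td_mul]
          congr 2
          ring
        rw [Finset.sum_congr rfl this]
        exact sum_le_hasSum _ (fun a _ => Tf_nonneg hp0 hp1 n (-r) a) (starstar hp0 hp1 n (-r))
      have := le_of_tendsto_of_tendsto' hfin hLlim hle
      rw [← Finset.sum_mul] at this
      exact this
    have := mul_le_mul_of_nonneg_right hK hEI.le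
    calc ∑ a ∈ Finset.range K, td p r a
        = ((∑ a ∈ Finset.range K, td p r a) * (EI p)⁻¹) * EI p := by field_simp
      _ ≤ ((EI p)⁻¹ * (EI p)⁻¹) * EI p := this
      _ = (EI p)⁻¹ := by field_simp
  have : T = (EI p)⁻¹ := le_antisymm hTle hTge
  rw [← this]
  exact hS.hasSum
noncomputable def Wm (p : ℝ) (t₁ t₂ : ℤ) (a b : ℕ) : ℝ :=
  p ^ ((a:ℤ)^2 + (b:ℤ)^2 - (a:ℤ)*(b:ℤ) + t₁*(a:ℤ) + t₂*(b:ℤ)) * (Ep p a)⁻¹ * (Ep p b)⁻¹ *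
    fE p (t₁ + (a:ℤ) - (b:ℤ)) * fE p (t₂ + (b:ℤ) - (a:ℤ))

variable {p : ℝ}

lemma Wm_nonneg (hp0 : 0 < p) (hp1 : p < 1) (t₁ t₂ : ℤ) (a b : ℕ) : 0 ≤ Wm p t₁ t₂ a b := by
  unfold Wm
  have h1 := fE_nonneg hp0 hp1 (t₁ + (a:ℤ) - (b:ℤ))
  have h2 := fE_nonneg hp0 hp1 (t₂ + (b:ℤ) - (a:ℤ))
  have h3 := Ep_pos hp0 hp1 a
  have h4 := Ep_pos hp0 hp1 b
  positivity

lemma Wm_fiber (hp0 : 0 < p) (hp1 : p < 1) (t₁ t₂ : ℤ) (hn : 0 ≤ t₁ + t₂) (b : ℕ) :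
    HasSum (fun a : ℕ => Wm p t₁ t₂ a b)
      ((Ep p ((t₁+t₂).toNat))⁻¹ * td p t₂ b) := by
  have hne : p ≠ 0 := hp0.ne'
  set n := (t₁+t₂).toNat with hndef
  have hcast : (n : ℤ) = t₁ + t₂ := by omega
  have h := (starstar hp0 hp1 n ((b:ℤ) - t₁)).mul_left
    (p ^ ((b:ℤ)^2 + t₂*(b:ℤ)) * (Ep p b)⁻¹)
  have hfun : (fun a : ℕ => p ^ ((b:ℤ)^2 + t₂*(b:ℤ)) * (Ep p b)⁻¹ * Tf p n ((b:ℤ) - t₁) a)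
      = fun a : ℕ => Wm p t₁ t₂ a b := by
    funext a
    unfold Tf Wm
    have e1 : (a:ℤ) - ((b:ℤ) - t₁) = t₁ + (a:ℤ) - (b:ℤ) := by ring
    have e2 : (n:ℤ) - (t₁ + (a:ℤ) - (b:ℤ)) = t₂ + (b:ℤ) - (a:ℤ) := by rw [hcast]; ring
    rw [e1, e2]
    have hz : p ^ ((b:ℤ)^2 + t₂*(b:ℤ)) * p ^ ((a:ℤ) * (t₁ + (a:ℤ) - (b:ℤ)))
        = p ^ ((a:ℤ)^2 + (b:ℤ)^2 - (a:ℤ)*(b:ℤ) + t₁*(a:ℤ) + t₂*(b:ℤ)) := by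
      rw [← zpow_add₀ hne]
      congr 1
      ring
    calc p ^ ((b:ℤ)^2 + t₂*(b:ℤ)) * (Ep p b)⁻¹ *
          (p ^ ((a:ℤ) * (t₁ + (a:ℤ) - (b:ℤ))) * (Ep p a)⁻¹ *
            (fE p (t₁ + (a:ℤ) - (b:ℤ)) * fE p (t₂ + (b:ℤ) - (a:ℤ))))
        = (p ^ ((b:ℤ)^2 + t₂*(b:ℤ)) * p ^ ((a:ℤ) * (t₁ + (a:ℤ) - (b:ℤ)))) * (Ep p a)⁻¹ * (Ep p b)⁻¹ *
            fE p (t₁ + (a:ℤ) - (b:ℤ)) * fE p (t₂ + (b:ℤ) - (a:ℤ)) := by ring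
      _ = _ := by rw [hz]
  rw [hfun] at h
  have hval : p ^ ((b:ℤ)^2 + t₂*(b:ℤ)) * (Ep p b)⁻¹ *
      (fE p (((b:ℤ) - t₁) + (n:ℤ)) * (Ep p n)⁻¹) = (Ep p n)⁻¹ * td p t₂ b := by
    unfold td
    have e3 : ((b:ℤ) - t₁) + (n:ℤ) = (b:ℤ) + t₂ := by rw [hcast]; ring
    have e4 : (b:ℤ) * ((b:ℤ) + t₂) = (b:ℤ)^2 + t₂*(b:ℤ) := by ring
    rw [e3, e4]
    ring
  rw [hval] at h
  exact h

lemma master (hp0 : 0 < p) (hp1 : p < 1) (t₁ t₂ : ℤ) (hn : 0 ≤ t₁ + t₂) :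
    HasSum (fun x : ℕ × ℕ => Wm p t₁ t₂ x.1 x.2)
      ((Ep p ((t₁+t₂).toNat))⁻¹ * (EI p)⁻¹) := by
  set n := (t₁+t₂).toNat with hndef
  -- work with swapped coordinates: x = (b, a)
  have hOuter : HasSum (fun b : ℕ => (Ep p n)⁻¹ * td p t₂ b) ((Ep p n)⁻¹ * (EI p)⁻¹) :=
    (durfee hp0 hp1 t₂).mul_left _
  have hsumm : Summable (fun x : ℕ × ℕ => Wm p t₁ t₂ x.2 x.1) := by
    rw [summable_prod_of_nonneg (fun x => Wm_nonneg hp0 hp1 t₁ t₂ x.2 x.1)]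
    constructor
    · intro b
      exact ⟨_, Wm_fiber hp0 hp1 t₁ t₂ hn b⟩
    · apply Summable.congr hOuter.summable
      intro b
      exact ((Wm_fiber hp0 hp1 t₁ t₂ hn b).tsum_eq).symm
  have htsum : (∑' x : ℕ × ℕ, Wm p t₁ t₂ x.2 x.1) = (Ep p n)⁻¹ * (EI p)⁻¹ := by
    rw [Summable.tsum_prod' hsumm (fun b => ⟨_, Wm_fiber hp0 hp1 t₁ t₂ hn b⟩)]
    rw [← hOuter.tsum_eq]
    apply tsum_congr
    intro b
    exact (Wm_fiber hp0 hp1 t₁ t₂ hn b).tsum_eq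
  have h := hsumm.hasSum
  rw [htsum] at h
  exact (Equiv.prodComm ℕ ℕ).hasSum_iff.mp h

lemma surj_iff_li {F : Type} [Field F] {a b : ℕ} (M : Matrix (Fin b) (Fin a) F) :
    Function.Surjective M.mulVecLin ↔ LinearIndependent F (fun i => M i) := by
  constructor
  · intro h
    have hrank : M.rank = b := by
      rw [Matrix.rank, LinearMap.range_eq_top.mpr h, finrank_top,
        Module.finrank_fintype_fun_eq_card, Fintype.card_fin]
    rw [linearIndependent_iff_card_eq_finrank_span]
    rw [Set.finrank, show (fun i => M i) = M.row from rfl, ← Matrix.rank_eq_finrank_span_row, hrank, Fintype.card_fin]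
  · intro h
    have hrank : M.rank = Fintype.card (Fin b) := LinearIndependent.rank_matrix h
    rw [← LinearMap.range_eq_top]
    apply Submodule.eq_top_of_finrank_eq
    rw [Module.finrank_fintype_fun_eq_card]
    exact hrank
lemma surCount_eq (F : Type) [Field F] [Fintype F] (a b : ℕ) :
    surCount F a b = ∏ i ∈ Finset.range b, (Fintype.card F ^ a - Fintype.card F ^ i) := by
  rcases le_or_gt b a with hba | hab
  · have e0 : {f : (Fin a → F) →ₗ[F] (Fin b → F) // Function.Surjective f} ≃
        {M : Matrix (Fin b) (Fin a) F // Function.Surjective M.mulVecLin} := by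
      apply Equiv.subtypeEquiv LinearMap.toMatrix'.toEquiv
      intro f
      have : (LinearMap.toMatrix' f).mulVecLin = f := by
        rw [← Matrix.toLin'_apply', Matrix.toLin'_toMatrix']
      rw [LinearEquiv.coe_toEquiv, this]
    have e1 : {M : Matrix (Fin b) (Fin a) F // Function.Surjective M.mulVecLin} ≃
        {s : Fin b → (Fin a → F) // LinearIndependent F s} := by
      apply Equiv.subtypeEquiv (Equiv.refl (Matrix (Fin b) (Fin a) F))
      intro M
      rw [Equiv.refl_apply]
      exact surj_iff_li M
    rw [surCount, Nat.card_congr (e0.trans e1), card_linearIndependent (by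
      rw [Module.finrank_fintype_fun_eq_card, Fintype.card_fin]; exact hba)]
    rw [Module.finrank_fintype_fun_eq_card, Fintype.card_fin]
    rw [Finset.prod_range fun i => Fintype.card F ^ a - Fintype.card F ^ i]
  · have : IsEmpty {f : (Fin a → F) →ₗ[F] (Fin b → F) // Function.Surjective f} := by
      constructor
      rintro ⟨f, hf⟩
      have h1 : Module.finrank F (Fin b → F) = Module.finrank F (LinearMap.range f) := by
        rw [LinearMap.range_eq_top.mpr hf, finrank_top]
      have h2 := LinearMap.finrank_range_le f
      rw [← h1, Module.finrank_fintype_fun_eq_card, Module.finrank_fintype_fun_eq_card,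
        Fintype.card_fin, Fintype.card_fin] at h2
      omega
    rw [surCount, Nat.card_of_isEmpty]
    symm
    apply Finset.prod_eq_zero (Finset.mem_range.mpr hab)
    rw [Nat.sub_self]

lemma factor_bridge {Q : ℝ} (hQ : 0 < Q) (i : ℕ) :
    1 - Q ^ (-(i:ℝ)-1) = 1 - (Q⁻¹)^(i+1) := by
  congr 1
  have e : -(i:ℝ)-1 = -((i+1:ℕ):ℝ) := by push_cast; ring
  rw [e, Real.rpow_neg hQ.le, Real.rpow_natCast, inv_pow]

lemma etaQ_eq_Ep {Q : ℝ} (hQ : 0 < Q) (k : ℕ) : etaQ Q k = Ep Q⁻¹ k :=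
  Finset.prod_congr rfl fun i _ => factor_bridge hQ i

lemma etaZ_eq_Ep {Q : ℝ} (hQ : 0 < Q) (k : ℤ) : etaZ Q k = Ep Q⁻¹ k.toNat :=
  etaQ_eq_Ep hQ k.toNat

lemma etaInf_eq_EI {Q : ℝ} (hQ : 0 < Q) : etaInf Q = EI Q⁻¹ :=
  tprod_congr fun i => factor_bridge hQ i

lemma surCount_cast (F : Type) [Field F] [Fintype F] (ρ a : ℕ) :
    (surCount F (a+ρ) ρ : ℝ) = (Fintype.card F : ℝ)^((a+ρ)*ρ) *
      (Ep (Fintype.card F : ℝ)⁻¹ (a+ρ) * (Ep (Fintype.card F : ℝ)⁻¹ a)⁻¹) := by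
  set Q : ℝ := (Fintype.card F : ℝ) with hQdef
  have hq1 : 1 < Fintype.card F := Fintype.one_lt_card
  have hQ1 : (1:ℝ) < Q := by rw [hQdef]; exact_mod_cast hq1
  have hQ0 : (0:ℝ) < Q := by linarith
  rw [surCount_eq, Nat.cast_prod]
  have hsub : ∀ i ∈ Finset.range ρ,
      ((Fintype.card F ^ (a+ρ) - Fintype.card F ^ i : ℕ) : ℝ) = Q^(a+ρ) - Q^i := by
    intro i hi
    have hle : Fintype.card F ^ i ≤ Fintype.card F ^ (a+ρ) :=
      Nat.pow_le_pow_right (by omega) (by simpa using (Finset.mem_range.mp hi).le.trans (by omega))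
    rw [Nat.cast_sub hle, Nat.cast_pow, Nat.cast_pow]
  rw [Finset.prod_congr rfl hsub]
  have hfac : ∀ i ∈ Finset.range ρ, Q^(a+ρ) - Q^i = Q^(a+ρ) * (1 - (Q⁻¹)^(a+ρ-i)) := by
    intro i hi
    have hile : i ≤ a + ρ := by
      have := Finset.mem_range.mp hi; omega
    have hsplit : Q^(a+ρ) = Q^i * Q^(a+ρ-i) := by
      rw [← pow_add]; congr 1; omega
    have h2 : Q^(a+ρ) * (Q^(a+ρ-i))⁻¹ = Q^i := by
      rw [hsplit, mul_assoc, mul_inv_cancel₀ (pow_ne_zero _ hQ0.ne'), mul_one]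
    rw [mul_sub, mul_one, inv_pow, h2]
  rw [Finset.prod_congr rfl hfac, Finset.prod_mul_distrib, Finset.prod_const,
    Finset.card_range, ← pow_mul]
  have hprod : ∏ i ∈ Finset.range ρ, (1 - (Q⁻¹)^(a+ρ-i))
      = ∏ j ∈ Finset.range ρ, (1 - (Q⁻¹)^(a+j+1)) := by
    rw [← Finset.prod_range_reflect]
    apply Finset.prod_congr rfl
    intro j hj
    have := Finset.mem_range.mp hj
    congr 2
    omega
  have hEp : Ep (Q⁻¹) (a+ρ) = Ep (Q⁻¹) a * ∏ j ∈ Finset.range ρ, (1 - (Q⁻¹)^(a+j+1)) := by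
    rw [Ep, Finset.prod_range_add]
    rfl
  rw [hprod]
  have hEa : Ep (Q⁻¹) a ≠ 0 := by
    have hp0 : (0:ℝ) < Q⁻¹ := by positivity
    have hp1 : Q⁻¹ < 1 := by rw [inv_lt_one_iff₀]; right; exact hQ1
    exact (Ep_pos hp0 hp1 a).ne'
  congr 1
  rw [hEp, mul_comm (Ep Q⁻¹ a), mul_inv_cancel_right₀ hEa]

lemma surCount_zero_lt (F : Type) [Field F] [Fintype F] {a b : ℕ} (hab : a < b) :
    surCount F a b = 0 := by
  rw [surCount_eq]
  exact Finset.prod_eq_zero (Finset.mem_range.mpr hab) (Nat.sub_self _)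

lemma surCount_cast_one (F : Type) [Field F] [Fintype F] (m : ℕ) :
    ((surCount F m 0 : ℕ) : ℝ) = 1 := by
  rw [surCount_eq]
  simp

/-- Let `q` be a prime power, `F` a finite field with `q` elements, and `s₁,s₂`
integers with `s₁+s₂ ≥ 0`.  Then `D_q(λ,φ,s₁,s₂) ≥ 0` for all `λ,φ`, and for all `ρ,π` the
double series `∑_{λ,φ} D_q(λ,φ,s₁,s₂) |Sur(F^λ,F^ρ)| |Sur(F^φ,F^π)|` converges (absolutely,
i.e. unconditionally in `ℝ`) with sum `q^{ρπ - s₁ρ - s₂π}`; in particular (`ρ = π = 0`)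
`∑_{λ,φ} D_q(λ,φ,s₁,s₂) = 1`. -/
theorem stmt_1 (q : ℕ) (hq : IsPrimePow q) (F : Type) [Field F] [Fintype F]
    (hF : Fintype.card F = q) (s₁ s₂ : ℤ) (hs : 0 ≤ s₁ + s₂) :
    (∀ l φ : ℕ, 0 ≤ Dq (q : ℝ) s₁ s₂ l φ) ∧
    (∀ ρ π : ℕ,
      HasSum (fun x : ℕ × ℕ =>
          Dq (q : ℝ) s₁ s₂ x.1 x.2 * (surCount F x.1 ρ : ℝ) * (surCount F x.2 π : ℝ))
        ((q : ℝ) ^ ((ρ : ℝ) * (π : ℝ) - (s₁ : ℝ) * (ρ : ℝ) - (s₂ : ℝ) * (π : ℝ)))) ∧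
    HasSum (fun x : ℕ × ℕ => Dq (q : ℝ) s₁ s₂ x.1 x.2) 1 := by
  have hq2 : 2 ≤ q := hq.two_le
  have hQ1 : (1:ℝ) < (q:ℝ) := by exact_mod_cast hq2
  have hQ0 : (0:ℝ) < (q:ℝ) := by linarith
  have hp0 : (0:ℝ) < (q:ℝ)⁻¹ := by positivity
  have hp1 : (q:ℝ)⁻¹ < 1 := by rw [inv_lt_one_iff₀]; right; exact hQ1
  have hEI := EI_pos hp0 hp1
  have hEp := Ep_pos hp0 hp1
  -- Part 1 : nonnegativity
  have part1 : ∀ l φ : ℕ, 0 ≤ Dq (q : ℝ) s₁ s₂ l φ := by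
    intro l φ
    unfold Dq
    split
    · simp only [etaInf_eq_EI hQ0, etaZ_eq_Ep hQ0, etaQ_eq_Ep hQ0]
      exact le_of_lt (div_pos (mul_pos (mul_pos (Real.rpow_pos_of_pos hQ0 _) hEI) (hEp _))
        (mul_pos (mul_pos (mul_pos (hEp _) (hEp _)) (hEp _)) (hEp _)))
    · exact le_refl 0
  -- Part 2 : moments
  have part2 : ∀ ρ π : ℕ,
      HasSum (fun x : ℕ × ℕ =>
          Dq (q : ℝ) s₁ s₂ x.1 x.2 * (surCount F x.1 ρ : ℝ) * (surCount F x.2 π : ℝ))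
        ((q : ℝ) ^ ((ρ : ℝ) * (π : ℝ) - (s₁ : ℝ) * (ρ : ℝ) - (s₂ : ℝ) * (π : ℝ))) := by
    intro ρ π
    set Q : ℝ := (q:ℝ) with hQdef
    set p : ℝ := (q:ℝ)⁻¹ with hpdef
    set t₁ : ℤ := s₁ + ρ - π with ht₁
    set t₂ : ℤ := s₂ + π - ρ with ht₂
    have htsum : t₁ + t₂ = s₁ + s₂ := by omega
    have ht : 0 ≤ t₁ + t₂ := by omega
    set n : ℕ := (t₁+t₂).toNat with hn
    set C : ℝ := Q ^ ((ρ:ℝ) * (π:ℝ) - (s₁:ℝ) * (ρ:ℝ) - (s₂:ℝ) * (π:ℝ)) with hC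
    have hM := (master hp0 hp1 t₁ t₂ ht).mul_left (C * (EI p * Ep p n))
    have hval : (C * (EI p * Ep p n)) * ((Ep p n)⁻¹ * (EI p)⁻¹) = C := by
      have hone : (EI p * Ep p n) * ((Ep p n)⁻¹ * (EI p)⁻¹) = 1 := by
        field_simp
        exact div_self (Ep_pos hp0 hp1 n).ne'
      calc (C * (EI p * Ep p n)) * ((Ep p n)⁻¹ * (EI p)⁻¹)
          = C * ((EI p * Ep p n) * ((Ep p n)⁻¹ * (EI p)⁻¹)) := by ring
        _ = C := by rw [hone, mul_one]
    simp only [← hn] at hM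
    rw [hval] at hM
    -- the injection
    have hjinj : Function.Injective (fun x : ℕ × ℕ => (x.1 + ρ, x.2 + π)) := by
      intro x y hxy
      simp only [Prod.mk.injEq, Prod.ext_iff] at hxy ⊢
      omega
    apply (Function.Injective.hasSum_iff hjinj ?vanish).mp ?main
    case vanish =>
      intro x hx
      have hcase : x.1 < ρ ∨ x.2 < π := by
        by_contra hcon
        push_neg at hcon
        exact hx ⟨(x.1 - ρ, x.2 - π), by
          simp only [Prod.ext_iff]
          exact ⟨by omega, by omega⟩⟩
      rcases hcase with h | h
      · rw [surCount_zero_lt F h]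
        simp
      · rw [surCount_zero_lt F h]
        simp
    case main =>
      apply HasSum.congr_fun hM
      intro x
      obtain ⟨a, b⟩ := x
      -- termwise identity
      have hterm : (C * (EI p * Ep p n)) * Wm p t₁ t₂ a b
        = Dq Q s₁ s₂ (a + ρ) (b + π) * (surCount F (a+ρ) ρ : ℝ) * (surCount F (b+π) π : ℝ) := ?_
      · exact hterm.symm
      unfold Dq
      by_cases hcond : -s₁ ≤ ((a+ρ:ℕ) : ℤ) - ((b+π:ℕ) : ℤ) ∧ ((a+ρ:ℕ) : ℤ) - ((b+π:ℕ) : ℤ) ≤ s₂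
      · rw [if_pos hcond]
        rw [surCount_cast F ρ a, surCount_cast F π b, hF]
        -- index normalizations
        have hi1 : s₂ - ((a+ρ:ℕ) : ℤ) + ((b+π:ℕ) : ℤ) = t₂ + (b:ℤ) - (a:ℤ) := by push_cast; omega
        have hi2 : s₁ + ((a+ρ:ℕ) : ℤ) - ((b+π:ℕ) : ℤ) = t₁ + (a:ℤ) - (b:ℤ) := by push_cast; omega
        have hnz1 : (0:ℤ) ≤ t₁ + (a:ℤ) - (b:ℤ) := by omega
        have hnz2 : (0:ℤ) ≤ t₂ + (b:ℤ) - (a:ℤ) := by omega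
        rw [hi1, hi2]
        simp only [etaInf_eq_EI hQ0, etaZ_eq_Ep hQ0, etaQ_eq_Ep hQ0]
        unfold Wm
        rw [show fE p (t₁ + (a:ℤ) - (b:ℤ)) = (Ep p ((t₁ + (a:ℤ) - (b:ℤ)).toNat))⁻¹ by
            simp [fE, hnz1]; intro h; omega,
          show fE p (t₂ + (b:ℤ) - (a:ℤ)) = (Ep p ((t₂ + (b:ℤ) - (a:ℤ)).toNat))⁻¹ by
            simp [fE, hnz2]; intro h; omega]
        have hsn : (s₁ + s₂).toNat = n := by omega
        rw [hsn]
        -- abbreviations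
        set El := Ep p (a+ρ) with hEl
        set Ef := Ep p (b+π) with hEf
        set Ea := Ep p a with hEa
        set Eb := Ep p b with hEb
        set E1 := Ep p ((t₁ + (a:ℤ) - (b:ℤ)).toNat) with hE1
        set E2 := Ep p ((t₂ + (b:ℤ) - (a:ℤ)).toNat) with hE2
        set En := Ep p n with hEn
        set v1 := Q ^ (-((a+ρ:ℕ):ℝ) ^ 2 - ((b+π:ℕ):ℝ) ^ 2 + ((a+ρ:ℕ):ℝ) * ((b+π:ℕ):ℝ)
          - (s₁:ℝ) * ((a+ρ:ℕ):ℝ) - (s₂:ℝ) * ((b+π:ℕ):ℝ)) with hv1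
        set v2 := Q ^ ((a+ρ)*ρ) with hv2
        set v3 := Q ^ ((b+π)*π) with hv3
        set Z : ℤ := (a:ℤ)^2 + (b:ℤ)^2 - (a:ℤ)*(b:ℤ) + t₁*(a:ℤ) + t₂*(b:ℤ) with hZ
        -- power identity
        have hA : v1 * v2 * v3 = C * p ^ Z := by
          have e5 : p ^ Z = Q ^ (((-Z : ℤ) : ℝ)) := by
            rw [hpdef, inv_zpow, ← zpow_neg, Real.rpow_intCast]
          rw [hv1, hv2, hv3, hC, e5, ← Real.rpow_natCast Q ((a+ρ)*ρ),
            ← Real.rpow_natCast Q ((b+π)*π), ← Real.rpow_add hQ0, ← Real.rpow_add hQ0,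
            ← Real.rpow_add hQ0]
          congr 1
          rw [hZ, ht₁, ht₂]
          push_cast
          ring
        have hne : El ≠ 0 := (hEp _).ne'
        have hne2 : Ef ≠ 0 := (hEp _).ne'
        have hne3 : Ea ≠ 0 := (hEp _).ne'
        have hne4 : Eb ≠ 0 := (hEp _).ne'
        have hne5 : E1 ≠ 0 := (hEp _).ne'
        have hne6 : E2 ≠ 0 := (hEp _).ne'
        have hD1 : El * Ef * E1 * E2 * Ea * Eb ≠ 0 := by
          simp [hne, hne2, hne3, hne4, hne5, hne6]
        have hD2 : Ea * Eb * E1 * E2 ≠ 0 := by simp [hne3, hne4, hne5, hne6]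
        have hkey : (v1 * v2 * v3 * (EI p) * En * El * Ef) * (Ea * Eb * E1 * E2)
            = (C * p ^ Z * (EI p) * En) * (El * Ef * E1 * E2 * Ea * Eb) := by
          linear_combination ((EI p) * En * El * Ef * Ea * Eb * E1 * E2) * hA
        calc (C * (EI p * En)) * (p ^ Z * Ea⁻¹ * Eb⁻¹ * E1⁻¹ * E2⁻¹)
            = (C * p ^ Z * (EI p) * En) / (Ea * Eb * E1 * E2) := by
              field_simp
          _ = (v1 * v2 * v3 * (EI p) * En * El * Ef) / (El * Ef * E1 * E2 * Ea * Eb) := by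
              rw [div_eq_div_iff hD2 hD1]
              linarith [hkey]
          _ = v1 * (EI p) * En / (El * Ef * E2 * E1) * (v2 * (El * Ea⁻¹)) * (v3 * (Ef * Eb⁻¹)) := by
              field_simp
      · rw [if_neg hcond]
        have hcase : t₁ + (a:ℤ) - (b:ℤ) < 0 ∨ t₂ + (b:ℤ) - (a:ℤ) < 0 := by
          push_neg at hcond
          omega
        have hWm : Wm p t₁ t₂ a b = 0 := by
          unfold Wm
          rcases hcase with h | h
          · rw [fE_neg h]; ring
          · rw [fE_neg h]; ring
        rw [hWm]
        ring
  refine ⟨part1, part2, ?_⟩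
  have h00 := part2 0 0
  have hone : ∀ m : ℕ, ((surCount F m 0 : ℕ) : ℝ) = 1 := surCount_cast_one F
  simp only [hone, mul_one, Nat.cast_zero, mul_zero, zero_mul, sub_zero, Real.rpow_zero] at h00
  exact h00
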